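/- There exists a function f : [0,1] → [0,1] that is continuum-preserving but whose square f × f : [0,1]² → [0,1]² is not connectedness-preserving; in fact there is an arc J ⊆ [0,1]² whose image under f × f is not compact. -/

import Mathlib

open Set Filter Topology

noncomputable section CEx
namespace CEx

open Classical

/-- an irrational number in (0,1) -/
def cc : ℝ := Real.sqrt 2 / 2

lemma sqrt2_lt_two : Real.sqrt 2 < 2 := by
  nlinarith [Real.sq_sqrt (by norm_num : (0:ℝ) ≤ 2), Real.sqrt_nonneg 2]

lemma cc_pos : 0 < cc := by
  have : 0 < Real.sqrt 2 := Real.sqrt_pos.mpr (by norm_num)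
  simp only [cc]; linarith

lemma cc_lt_one : cc < 1 := by
  simp only [cc]; linarith [sqrt2_lt_two]

lemma cc_irr : Irrational cc := by
  have h : Irrational (Real.sqrt 2 / ((2:ℕ):ℝ)) :=
    irrational_sqrt_two.div_natCast (by norm_num)
  rw [show ((2:ℕ):ℝ) = 2 by norm_num] at h
  exact h

/-- the countable subgroup ℚ + ℤ·cc -/
def G : AddSubgroup ℝ where
  carrier := {x | ∃ q : ℚ, ∃ n : ℤ, x = q + n * cc}
  zero_mem' := ⟨0, 0, by norm_num⟩
  add_mem' := by
    rintro x y ⟨q, n, rfl⟩ ⟨q', n', rfl⟩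
    exact ⟨q + q', n + n', by push_cast; ring⟩
  neg_mem' := by
    rintro x ⟨q, n, rfl⟩
    exact ⟨-q, -n, by push_cast; ring⟩

lemma mem_G {x : ℝ} : x ∈ G ↔ ∃ q : ℚ, ∃ n : ℤ, x = q + n * cc := Iff.rfl

lemma rat_mem_G (q : ℚ) : (q : ℝ) ∈ G := ⟨q, 0, by push_cast; ring⟩

lemma cc_mem_G : cc ∈ G := ⟨0, 1, by push_cast; ring⟩

lemma cc_int_eq {q q' : ℚ} {n n' : ℤ} (h : (q:ℝ) + n * cc = q' + n' * cc) : n = n' := by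
  by_contra hne
  have hnn : n' ≠ n := fun e => hne e.symm
  have hne' : ((n':ℝ) - n) ≠ 0 := by
    have h2 : (n':ℝ) ≠ n := by exact_mod_cast hnn
    exact sub_ne_zero.mpr h2
  apply cc_irr
  refine ⟨(q - q') / ((n' : ℚ) - (n : ℚ)), ?_⟩
  push_cast
  rw [div_eq_iff hne']
  linarith

/-- the unique integer n with x = q + n·cc, for x ∈ G -/
def nu (x : ℝ) : ℤ := if h : x ∈ G then h.choose_spec.choose else 0

lemma nu_spec {x : ℝ} (h : x ∈ G) : ∃ q : ℚ, x = q + nu x * cc := by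
  rw [nu, dif_pos h]
  exact ⟨h.choose, h.choose_spec.choose_spec⟩

lemma nu_eq {x : ℝ} {q : ℚ} {n : ℤ} (hx : x = q + n * cc) : nu x = n := by
  have hm : x ∈ G := ⟨q, n, hx⟩
  obtain ⟨q', hq'⟩ := nu_spec hm
  exact cc_int_eq (hq'.symm.trans hx)

lemma G_countable : (G : Set ℝ).Countable := by
  have hsub : (G : Set ℝ) ⊆ Set.range (fun p : ℚ × ℤ => (p.1 : ℝ) + p.2 * cc) := by
    rintro x ⟨q, n, rfl⟩; exact ⟨(q, n), rfl⟩
  exact (Set.countable_range _).mono hsub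

lemma card_quot : Cardinal.continuum ≤ Cardinal.mk (ℝ ⧸ G) := by
  haveI : Countable (G : Set ℝ) := G_countable.to_subtype
  have hG : Cardinal.mk G ≤ Cardinal.aleph0 := Cardinal.mk_le_aleph0
  have e := AddSubgroup.addGroupEquivQuotientProdAddSubgroup (s := G)
  have h1 : Cardinal.continuum = Cardinal.mk (ℝ ⧸ G) * Cardinal.mk G := by
    rw [← Cardinal.mk_real, Cardinal.mk_congr e, Cardinal.mk_prod,
      Cardinal.lift_id, Cardinal.lift_id]
  by_contra hlt
  push_neg at hlt
  have h2 : Cardinal.mk (ℝ ⧸ G) * Cardinal.mk G < Cardinal.continuum :=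
    Cardinal.mul_lt_of_lt Cardinal.aleph0_le_continuum hlt
      (lt_of_le_of_lt hG Cardinal.aleph0_lt_continuum)
  rw [← h1] at h2
  exact lt_irrefl _ h2

lemma card_sub : Cardinal.mk (Set.Icc (0:ℝ) 1) ≤ Cardinal.mk {C : ℝ ⧸ G // C ≠ 0} := by
  have h1 : Cardinal.mk (Set.Icc (0:ℝ) 1) ≤ Cardinal.continuum := by
    rw [← Cardinal.mk_real]; exact Cardinal.mk_set_le _
  refine h1.trans ?_
  by_contra hlt
  push_neg at hlt
  have h2 : Cardinal.mk {C : ℝ ⧸ G // ¬ C ≠ 0} ≤ 1 := by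
    rw [Cardinal.le_one_iff_subsingleton]
    constructor
    rintro ⟨c, hc⟩ ⟨d, hd⟩
    simp only [not_not] at hc hd
    simp [hc, hd]
  have h3 := Cardinal.mk_sum_compl {C : ℝ ⧸ G | C ≠ 0}
  have h4 : Cardinal.mk (ℝ ⧸ G) < Cardinal.continuum := by
    rw [← h3]
    exact Cardinal.add_lt_of_lt Cardinal.aleph0_le_continuum hlt
      (lt_of_le_of_lt h2 (lt_of_lt_of_le Cardinal.one_lt_aleph0
        Cardinal.aleph0_le_continuum))
  exact absurd card_quot (not_le.mpr h4)

def emb : Set.Icc (0:ℝ) 1 ↪ {C : ℝ ⧸ G // C ≠ 0} :=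
  Classical.choice (Cardinal.le_def _ _ |>.mp card_sub)

def tau (C : ℝ ⧸ G) : Set.Icc (0:ℝ) 1 :=
  if h : C ≠ 0 then Function.invFun emb ⟨C, h⟩ else ⟨0, by norm_num⟩

lemma tau_surj (z : Set.Icc (0:ℝ) 1) : ∃ C : ℝ ⧸ G, C ≠ 0 ∧ tau C = z := by
  refine ⟨(emb z).1, (emb z).2, ?_⟩
  rw [tau, dif_pos (emb z).2]
  have h : (⟨(emb z).1, (emb z).2⟩ : {C : ℝ ⧸ G // C ≠ 0}) = emb z := rfl
  rw [h]
  exact Function.leftInverse_invFun emb.injective z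

/-- the values on the distinguished orbit -/
def a (n : ℤ) : ℝ :=
  if n < 0 then 0 else if n ≤ 1 then 1
  else if Even n then 1/2 - 1/(2*(n:ℝ)) else 1 - 1/(2*(n:ℝ))

lemma a_bounds {n : ℤ} (h : ¬ n < 0) (h1 : ¬ n ≤ 1) :
    (2:ℝ) ≤ (n:ℝ) ∧ 0 < 1/(2*(n:ℝ)) ∧ 1/(2*(n:ℝ)) ≤ 1/4 := by
  have h2 : (2:ℤ) ≤ n := by omega
  have h2' : (2:ℝ) ≤ (n:ℝ) := by exact_mod_cast h2
  refine ⟨h2', by positivity, ?_⟩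
  rw [div_le_div_iff₀ (by linarith) (by norm_num)]
  linarith

lemma a_mem (n : ℤ) : a n ∈ Set.Icc (0:ℝ) 1 := by
  rw [a]
  split_ifs with h h1 h2
  · norm_num
  · norm_num
  · obtain ⟨hn, hp, hb⟩ := a_bounds h h1
    constructor <;> linarith
  · obtain ⟨hn, hp, hb⟩ := a_bounds h h1
    constructor <;> linarith

lemma a_ne_half (n : ℤ) : a n ≠ 1/2 := by
  rw [a]
  split_ifs with h h1 h2
  · norm_num
  · norm_num
  · obtain ⟨hn, hp, hb⟩ := a_bounds h h1
    intro he; linarith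
  · obtain ⟨hn, hp, hb⟩ := a_bounds h h1
    intro he; linarith

lemma a_zero : a 0 = 1 := by norm_num [a]
lemma a_one : a 1 = 1 := by norm_num [a]
lemma a_neg_one : a (-1) = 0 := by norm_num [a]

lemma a_pair_le {n : ℤ} (h : n ≠ 0) : a n ≤ 1/2 ∨ a (n + 1) ≤ 1/2 := by
  rcases lt_or_ge n 0 with hn | hn
  · left; rw [a, if_pos hn]; norm_num
  · have hn1 : 1 ≤ n := by omega
    rcases Int.even_or_odd n with he | ho
    · left
      have h2 : (2:ℤ) ≤ n := by
        rcases he with ⟨k, hk⟩; omega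
      rw [a, if_neg (by omega), if_neg (by omega), if_pos he]
      have := a_bounds (n := n) (by omega) (by omega)
      linarith [this.2.1]
    · right
      have he1 : Even (n + 1) := by
        rcases ho with ⟨k, hk⟩; exact ⟨k + 1, by omega⟩
      rw [a, if_neg (by omega), if_neg (by omega), if_pos he1]
      have := a_bounds (n := n + 1) (by omega) (by omega)
      linarith [this.2.1]

lemma a_pair_one {n : ℤ} (h1 : a n = 1) (h2 : a (n + 1) = 1) : n = 0 := by
  by_contra hne
  rcases a_pair_le hne with h | h
  · rw [h1] at h; norm_num at h
  · rw [h2] at h; norm_num at h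

lemma a_even (k : ℤ) (hk : 1 ≤ k) : a (2*k) = 1/2 - 1/(4*(k:ℝ)) := by
  have : Even (2*k) := ⟨k, by ring⟩
  rw [a, if_neg (by omega), if_neg (by omega), if_pos this]
  push_cast
  ring_nf

lemma a_odd (k : ℤ) (hk : 1 ≤ k) : a (2*k+1) = 1 - 1/(4*(k:ℝ)+2) := by
  have hne : ¬ Even (2*k+1) := by
    simp [Int.even_add_one, parity_simps]
  rw [a, if_neg (by omega), if_neg (by omega), if_neg hne]
  push_cast
  ring_nf

abbrev mkq (x : ℝ) : ℝ ⧸ G := QuotientAddGroup.mk x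

lemma mkq_eq {x y : ℝ} (h : x - y ∈ G) : mkq x = mkq y := by
  rw [QuotientAddGroup.eq]
  have h2 := neg_mem h
  simpa [neg_sub, sub_eq_neg_add] using h2

lemma mkq_add_cc (x : ℝ) : mkq (x + cc) = mkq x :=
  mkq_eq (by simpa using cc_mem_G)

/-- the function on ℝ -/
def f0 (x : ℝ) : Set.Icc (0:ℝ) 1 :=
  if x ∈ G then ⟨a (nu x), a_mem _⟩
  else if ∃ q : ℚ, x = (mkq x).out + q then tau (mkq x)
  else ⟨0, by norm_num⟩

lemma f0_G {x : ℝ} {q : ℚ} {n : ℤ} (hx : x = q + n * cc) :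
    f0 x = ⟨a n, a_mem n⟩ := by
  have hm : x ∈ G := ⟨q, n, hx⟩
  rw [f0, if_pos hm]
  exact Subtype.ext (by simp [nu_eq hx])

lemma f0_slot {x : ℝ} (hx : x ∉ G) (h : ∃ q : ℚ, x = (mkq x).out + q) :
    f0 x = tau (mkq x) := by
  rw [f0, if_neg hx, if_pos h]

lemma f0_nonslot {x : ℝ} (hx : x ∉ G) (h : ¬ ∃ q : ℚ, x = (mkq x).out + q) :
    f0 x = ⟨0, by norm_num⟩ := by
  rw [f0, if_neg hx, if_neg h]

/-- on any open interval, f0 attains any prescribed value -/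
lemma f0_image {A B : ℝ} (hAB : A < B) (z : Set.Icc (0:ℝ) 1) :
    ∃ w : ℝ, A < w ∧ w < B ∧ f0 w = z := by
  obtain ⟨C, hC0, hCz⟩ := tau_surj z
  set y := C.out with hy
  have hmky : mkq y = C := QuotientAddGroup.out_eq' C
  have hyG : y ∉ G := by
    intro h
    exact hC0 (by rw [← hmky]; exact (QuotientAddGroup.eq_zero_iff _).mpr h)
  obtain ⟨q, hq1, hq2⟩ := exists_rat_btwn (sub_lt_sub_right hAB y)
  refine ⟨y + q, by linarith, by linarith, ?_⟩
  have hwq : (y + q) - y ∈ G := by simpa using rat_mem_G q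
  have hmk : mkq (y + q) = C := by rw [mkq_eq hwq, hmky]
  have hw : (y + q) ∉ G := by
    intro h
    exact hyG (by simpa using AddSubgroup.sub_mem G h hwq)
  rw [f0_slot hw ⟨q, by rw [hmk, ← hy]⟩, hmk, hCz]

/-- pair structure along the shifted diagonal -/
lemma pair_struct (s : ℝ) :
    (∃ n : ℤ, (f0 s : ℝ) = a n ∧ (f0 (s + cc) : ℝ) = a (n + 1)) ∨
    (f0 s : ℝ) = 0 ∨ (f0 (s + cc) : ℝ) = 0 := by
  by_cases hs : s ∈ G
  · left
    obtain ⟨q, n, hqn⟩ := hs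
    refine ⟨n, ?_, ?_⟩
    · rw [f0_G hqn]
    · have h2 : s + cc = q + ((n + 1 : ℤ) : ℝ) * cc := by
        rw [hqn]; push_cast; ring
      rw [f0_G h2]
  · have hs' : s + cc ∉ G := by
      intro h
      exact hs (by simpa using AddSubgroup.sub_mem G h cc_mem_G)
    by_cases hslot : ∃ q : ℚ, s = (mkq s).out + q
    · right; right
      have hmk : mkq (s + cc) = mkq s := mkq_add_cc s
      have : ¬ ∃ q : ℚ, s + cc = (mkq (s + cc)).out + q := by
        rintro ⟨q', hq'⟩
        obtain ⟨q, hq⟩ := hslot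
        rw [hmk] at hq'
        apply cc_irr
        exact ⟨q' - q, by push_cast; linarith⟩
      rw [f0_nonslot hs' this]
    · right; left
      rw [f0_nonslot hs hslot]

/-- the arc parametrization -/
def h01 (t : Set.Icc (0:ℝ) 1) : Set.Icc (0:ℝ) 1 × Set.Icc (0:ℝ) 1 :=
  (⟨(1 - cc) * t, by
      constructor
      · have := t.2.1; nlinarith [cc_lt_one]
      · have := t.2.2; nlinarith [cc_pos, cc_lt_one]⟩,
   ⟨(1 - cc) * t + cc, by
      constructor
      · have := t.2.1; nlinarith [cc_pos, cc_lt_one]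
      · have := t.2.2; nlinarith [cc_pos, cc_lt_one]⟩)

def J : Set (Set.Icc (0:ℝ) 1 × Set.Icc (0:ℝ) 1) := Set.range h01

/-- the function on the interval -/
def f (x : Set.Icc (0:ℝ) 1) : Set.Icc (0:ℝ) 1 := f0 x

lemma mem_img {s : ℝ} (h0 : 0 ≤ s) (h1 : s ≤ 1 - cc) :
    (f0 s, f0 (s + cc)) ∈ Prod.map f f '' J := by
  have hc1 : (0:ℝ) < 1 - cc := by linarith [cc_lt_one]
  have ht : s / (1 - cc) ∈ Set.Icc (0:ℝ) 1 := by
    constructor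
    · positivity
    · rw [div_le_one hc1]; linarith
  refine ⟨h01 ⟨s / (1 - cc), ht⟩, ⟨_, rfl⟩, ?_⟩
  have hst : (1 - cc) * (s / (1 - cc)) = s := by field_simp
  simp only [h01, Prod.map, f]
  congr 1 <;> simp [hst]

lemma img_elim {p : Set.Icc (0:ℝ) 1 × Set.Icc (0:ℝ) 1}
    (hp : p ∈ Prod.map f f '' J) :
    ∃ s : ℝ, 0 ≤ s ∧ s ≤ 1 - cc ∧ p.1 = f0 s ∧ p.2 = f0 (s + cc) := by
  obtain ⟨x, ⟨t, rfl⟩, rfl⟩ := hp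
  refine ⟨(1 - cc) * t, ?_, ?_, rfl, rfl⟩
  · have := t.2.1; nlinarith [cc_lt_one]
  · have := t.2.2; nlinarith [cc_pos, cc_lt_one]

instance : ConnectedSpace (Set.Icc (0:ℝ) 1) :=
  Subtype.connectedSpace ⟨Set.nonempty_Icc.mpr (by norm_num), isPreconnected_Icc⟩

lemma key_image {K : Set (Set.Icc (0:ℝ) 1)} (hK : IsConnected K)
    {x y : Set.Icc (0:ℝ) 1} (hx : x ∈ K) (hy : y ∈ K) (hxy : (x:ℝ) < y) :
    f '' K = Set.univ := by
  apply Set.eq_univ_of_univ_subset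
  intro z _
  obtain ⟨w, hw1, hw2, hw3⟩ := f0_image hxy z
  have hK' : IsPreconnected (Subtype.val '' K) :=
    (hK.image _ continuous_subtype_val.continuousOn).isPreconnected
  have hmem : w ∈ Subtype.val '' K :=
    hK'.ordConnected.out ⟨x, hx, rfl⟩ ⟨y, hy, rfl⟩ ⟨hw1.le, hw2.le⟩
  obtain ⟨w', hw'K, hw'⟩ := hmem
  exact ⟨w', hw'K, by rw [f, hw', hw3]⟩

lemma part1 (K : Set (Set.Icc (0:ℝ) 1)) (_hKc : IsCompact K) (hK : IsConnected K) :
    IsCompact (f '' K) ∧ IsConnected (f '' K) := by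
  by_cases hsub : K.Subsingleton
  · obtain ⟨x, hx⟩ := hK.nonempty
    rw [hsub.eq_singleton_of_mem hx, Set.image_singleton]
    exact ⟨isCompact_singleton, isConnected_singleton⟩
  · rw [Set.not_subsingleton_iff] at hsub
    obtain ⟨x, hx, y, hy, hxy⟩ := hsub
    have hne : (x:ℝ) ≠ y := fun h => hxy (Subtype.ext h)
    have huniv : f '' K = Set.univ := by
      rcases hne.lt_or_gt with h | h
      · exact key_image hK hx hy h
      · exact key_image hK hy hx h
    rw [huniv]
    exact ⟨isCompact_univ, isConnected_univ⟩

lemma one_sub_cc_pos : (0:ℝ) < 1 - cc := by linarith [cc_lt_one]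

lemma h01_inj : Function.Injective h01 := by
  intro s t h
  have h1 : (1 - cc) * (s:ℝ) = (1 - cc) * t := by
    have h2 := congrArg (fun p : Set.Icc (0:ℝ) 1 × Set.Icc (0:ℝ) 1 => (p.1 : ℝ)) h
    simpa [h01] using h2
  exact Subtype.ext (mul_left_cancel₀ (ne_of_gt one_sub_cc_pos) h1)

lemma h01_cont : Continuous h01 := by
  refine Continuous.prodMk ?_ ?_
  · exact Continuous.subtype_mk (continuous_const.mul continuous_subtype_val) _
  · exact Continuous.subtype_mk
      ((continuous_const.mul continuous_subtype_val).add continuous_const) _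

lemma arc_homeo : Nonempty (Set.Icc (0:ℝ) 1 ≃ₜ J) := by
  refine ⟨Continuous.homeoOfEquivCompactToT2 (f := Equiv.ofInjective h01 h01_inj) ?_⟩
  exact continuous_induced_rng.mpr h01_cont

def vpt : Set.Icc (0:ℝ) 1 × Set.Icc (0:ℝ) 1 := (⟨1/2, by norm_num⟩, ⟨1, by norm_num⟩)

lemma vpt_not_mem : vpt ∉ Prod.map f f '' J := by
  intro hv
  obtain ⟨s, _, _, h1, h2⟩ := img_elim hv
  rcases pair_struct s with ⟨n, hn1, hn2⟩ | h0 | h0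
  · have hh : ((vpt.1 : ℝ)) = a n := by rw [h1, hn1]
    have : a n = 1/2 := by rw [← hh]; norm_num [vpt]
    exact a_ne_half n this
  · have hh : ((vpt.1 : ℝ)) = 0 := by rw [h1]; exact h0
    norm_num [vpt] at hh
  · have hh : ((vpt.2 : ℝ)) = 0 := by rw [h2]; exact h0
    norm_num [vpt] at hh

lemma seq_exists (k : ℕ) : ∃ s : ℝ, 0 ≤ s ∧ s ≤ 1 - cc ∧
    (f0 s : ℝ) = 1/2 - 1/(4*((k:ℝ)+1)) ∧
    (f0 (s + cc) : ℝ) = 1 - 1/(4*((k:ℝ)+1)+2) := by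
  set m : ℤ := 2*((k:ℤ)+1) with hm
  obtain ⟨q, hq1, hq2⟩ :=
    exists_rat_btwn (show -((m:ℝ)*cc) < 1 - cc - (m:ℝ)*cc by linarith [one_sub_cc_pos])
  refine ⟨q + (m:ℝ)*cc, by linarith, by linarith, ?_, ?_⟩
  · have e1 : (f0 ((q:ℝ) + (m:ℝ)*cc) : ℝ) = a m := by rw [f0_G rfl]
    rw [e1, hm, a_even ((k:ℤ)+1) (by omega)]
    push_cast
    ring_nf
  · have h2 : (q:ℝ) + (m:ℝ)*cc + cc = (q:ℝ) + ((m+1 : ℤ):ℝ)*cc := by push_cast; ring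
    have e1 : (f0 ((q:ℝ) + (m:ℝ)*cc + cc) : ℝ) = a (m+1) := by rw [f0_G h2]
    rw [e1, hm, show (2*((k:ℤ)+1)+1 : ℤ) = 2*((k:ℤ)+1)+1 from rfl]
    rw [show (2*((k:ℤ)+1)) + 1 = 2*((k:ℤ)+1)+1 from rfl, a_odd ((k:ℤ)+1) (by omega)]
    push_cast
    ring_nf

lemma tendsto_aux : Tendsto (fun k : ℕ => 1/(4*((k:ℝ)+1))) atTop (𝓝 0) := by
  have h1 : Tendsto (fun k : ℕ => 4*((k:ℝ)+1)) atTop atTop := by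
    apply tendsto_atTop_mono (fun k => ?_) tendsto_natCast_atTop_atTop
    have : (0:ℝ) ≤ (k:ℝ) := Nat.cast_nonneg k
    linarith
  refine (tendsto_inv_atTop_zero.comp h1).congr fun k => ?_
  simp [Function.comp, one_div]

lemma tendsto_aux2 : Tendsto (fun k : ℕ => 1/(4*((k:ℝ)+1)+2)) atTop (𝓝 0) := by
  have h1 : Tendsto (fun k : ℕ => 4*((k:ℝ)+1)+2) atTop atTop := by
    apply tendsto_atTop_mono (fun k => ?_) tendsto_natCast_atTop_atTop
    have : (0:ℝ) ≤ (k:ℝ) := Nat.cast_nonneg k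
    linarith
  refine (tendsto_inv_atTop_zero.comp h1).congr fun k => ?_
  simp [Function.comp, one_div]

lemma not_compact_img : ¬ IsCompact (Prod.map f f '' J) := by
  intro hcomp
  have hclosed : IsClosed (Prod.map f f '' J) := hcomp.isClosed
  choose s hs0 hs1 hsf hsg using seq_exists
  have hmem : ∀ k : ℕ, ((f0 (s k), f0 (s k + cc))) ∈ Prod.map f f '' J :=
    fun k => mem_img (hs0 k) (hs1 k)
  have hlim : Tendsto (fun k : ℕ => (f0 (s k), f0 (s k + cc))) atTop (𝓝 vpt) := by
    refine Filter.Tendsto.prodMk_nhds ?_ ?_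
    · rw [tendsto_subtype_rng]
      have h2 : Tendsto (fun k : ℕ => 1/2 - 1/(4*((k:ℝ)+1))) atTop (𝓝 (1/2)) := by
        simpa using tendsto_const_nhds.sub tendsto_aux
      refine h2.congr fun k => ?_
      rw [hsf]
    · rw [tendsto_subtype_rng]
      have h2 : Tendsto (fun k : ℕ => 1 - 1/(4*((k:ℝ)+1)+2)) atTop (𝓝 1) := by
        simpa using tendsto_const_nhds.sub tendsto_aux2
      refine h2.congr fun k => ?_
      rw [hsg]
  exact vpt_not_mem (hclosed.mem_of_tendsto hlim (Filter.Eventually.of_forall hmem))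

lemma J_connected : IsConnected J := isConnected_range h01_cont

lemma not_conn_img : ¬ IsConnected (Prod.map f f '' J) := by
  intro hconn
  set U : Set (Set.Icc (0:ℝ) 1 × Set.Icc (0:ℝ) 1) :=
    {p | 1/2 < (p.1:ℝ) ∧ 1/2 < (p.2:ℝ)} with hUdef
  set V : Set (Set.Icc (0:ℝ) 1 × Set.Icc (0:ℝ) 1) :=
    {p | (p.1:ℝ) < 3/4 ∨ (p.2:ℝ) < 3/4} with hVdef
  have hU : IsOpen U :=
    (isOpen_lt continuous_const (continuous_subtype_val.comp continuous_fst)).inter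
      (isOpen_lt continuous_const (continuous_subtype_val.comp continuous_snd))
  have hV : IsOpen V :=
    (isOpen_lt (continuous_subtype_val.comp continuous_fst) continuous_const).union
      (isOpen_lt (continuous_subtype_val.comp continuous_snd) continuous_const)
  have hcover : Prod.map f f '' J ⊆ U ∪ V := by
    intro p _
    by_cases h : (p.1:ℝ) < 3/4
    · exact Or.inr (Or.inl h)
    · by_cases h2 : (p.2:ℝ) < 3/4
      · exact Or.inr (Or.inr h2)
      · exact Or.inl ⟨by push_neg at h; linarith, by push_neg at h2; linarith⟩
  have hUne : (Prod.map f f '' J ∩ U).Nonempty := by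
    obtain ⟨q, hq1, hq2⟩ := exists_rat_btwn one_sub_cc_pos
    have hq0 : (0:ℝ) ≤ (q:ℝ) := le_of_lt hq1
    have hmem := mem_img hq0 (le_of_lt hq2)
    have h1 : (q:ℝ) = (q:ℝ) + ((0:ℤ):ℝ) * cc := by push_cast; ring
    have e1 : (f0 (q:ℝ) : ℝ) = a 0 := by rw [f0_G h1]
    have e2 : (f0 ((q:ℝ) + cc) : ℝ) = a 1 := by
      have h2 : (q:ℝ) + cc = (q:ℝ) + ((1:ℤ):ℝ) * cc := by push_cast; ring
      rw [f0_G h2]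
    refine ⟨(f0 (q:ℝ), f0 ((q:ℝ) + cc)), hmem, ?_, ?_⟩
    · show (1:ℝ)/2 < (f0 (q:ℝ) : ℝ)
      rw [e1, a_zero]; norm_num
    · show (1:ℝ)/2 < (f0 ((q:ℝ) + cc) : ℝ)
      rw [e2, a_one]; norm_num
  have hVne : (Prod.map f f '' J ∩ V).Nonempty := by
    obtain ⟨q, hq1, hq2⟩ := exists_rat_btwn cc_lt_one
    have hs0 : (0:ℝ) ≤ (q:ℝ) - cc := by linarith
    have hs1 : (q:ℝ) - cc ≤ 1 - cc := by linarith
    have hmem := mem_img hs0 hs1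
    have h1 : (q:ℝ) - cc = (q:ℝ) + ((-1:ℤ):ℝ) * cc := by push_cast; ring
    have e1 : (f0 ((q:ℝ) - cc) : ℝ) = a (-1) := by rw [f0_G h1]
    refine ⟨(f0 ((q:ℝ) - cc), f0 ((q:ℝ) - cc + cc)), hmem, Or.inl ?_⟩
    show (f0 ((q:ℝ) - cc) : ℝ) < 3/4
    rw [e1, a_neg_one]
    norm_num
  have hdisj : Prod.map f f '' J ∩ (U ∩ V) = ∅ := by
    rw [Set.eq_empty_iff_forall_notMem]
    rintro p ⟨hP, ⟨hU1, hU2⟩, hVp⟩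
    obtain ⟨t, _, _, h1, h2⟩ := img_elim hP
    rcases pair_struct t with ⟨n, hn1, hn2⟩ | h0 | h0
    · have hv1 : (p.1:ℝ) = a n := by rw [h1, hn1]
      have hv2 : (p.2:ℝ) = a (n+1) := by rw [h2, hn2]
      have hn0 : n = 0 := by
        by_contra hne
        rcases a_pair_le hne with h | h
        · rw [hv1] at hU1; linarith
        · rw [hv2] at hU2; linarith
      rw [hn0] at hv1 hv2
      rw [a_zero] at hv1
      have : a (0+1) = 1 := by norm_num [a_one]
      rw [this] at hv2
      rcases hVp with h | h
      · rw [hv1] at h; linarith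
      · rw [hv2] at h; linarith
    · rw [h1, h0] at hU1; linarith
    · rw [h2, h0] at hU2; linarith
  obtain ⟨p, hp⟩ := hconn.isPreconnected U V hU hV hcover hUne hVne
  rw [Set.eq_empty_iff_forall_notMem] at hdisj
  exact hdisj p hp


end CEx
end CEx

theorem exists_continuumP_square_not_connP :
    ∃ f : Set.Icc (0:ℝ) 1 → Set.Icc (0:ℝ) 1,
      (∀ K : Set (Set.Icc (0:ℝ) 1), IsCompact K → IsConnected K →
        IsCompact (f '' K) ∧ IsConnected (f '' K)) ∧
      (∃ J : Set (Set.Icc (0:ℝ) 1 × Set.Icc (0:ℝ) 1),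
        Nonempty (Set.Icc (0:ℝ) 1 ≃ₜ J) ∧ ¬ IsCompact (Prod.map f f '' J)) ∧
      ¬ ∀ A : Set (Set.Icc (0:ℝ) 1 × Set.Icc (0:ℝ) 1), IsConnected A →
          IsConnected (Prod.map f f '' A) := by
  refine ⟨CEx.f, CEx.part1, ⟨CEx.J, CEx.arc_homeo, CEx.not_compact_img⟩, ?_⟩
  intro h
  exact CEx.not_conn_img (h CEx.J CEx.J_connected)
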